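/- In a D-regular graph with best-response function φ(y) = (α/τ)·W((τ^{(α+1)/α}/α)·exp(-τy/α)), the common value y = (α/(τ(1+D)))·W((τ^{(α+1)/α}/α)·(1+D)) is a symmetric Nash equilibrium: it satisfies y = φ(D·y). -/

import Mathlib

/-- The Lambert W function on `[0,∞)`: the inverse of `x ↦ x * exp x` on `[0,∞)`. -/
noncomputable def lambertW (x : ℝ) : ℝ :=
  Function.invFunOn (fun t => t * Real.exp t) (Set.Ici 0) x

private lemma lw_mono : StrictMonoOn (fun t : ℝ => t * Real.exp t) (Set.Ici 0) := by
  intro a ha b hb hab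
  have : Real.exp a ≤ Real.exp b := Real.exp_le_exp.mpr hab.le
  have ha' : (0:ℝ) ≤ a := ha
  have h1 : a * Real.exp a < b * Real.exp a :=
    mul_lt_mul_of_pos_right hab (Real.exp_pos a)
  have h2 : b * Real.exp a ≤ b * Real.exp b :=
    mul_le_mul_of_nonneg_left this (le_trans ha' hab.le)
  exact h1.trans_le h2

private lemma lw_spec (x : ℝ) (hx : 0 ≤ x) :
    0 ≤ lambertW x ∧ lambertW x * Real.exp (lambertW x) = x := by
  have hcont : ContinuousOn (fun t : ℝ => t * Real.exp t) (Set.Icc 0 x) :=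
    (continuous_id.mul Real.continuous_exp).continuousOn
  have hmem : x ∈ Set.Icc ((0:ℝ) * Real.exp 0) (x * Real.exp x) := by
    constructor
    · simp [hx]
    · nlinarith [Real.one_le_exp hx]
  have := intermediate_value_Icc hx hcont hmem
  obtain ⟨t, ht, hft⟩ := this
  have hex : ∃ a ∈ Set.Ici (0:ℝ), (fun t : ℝ => t * Real.exp t) a = x :=
    ⟨t, ht.1, hft⟩
  exact ⟨Function.invFunOn_mem hex, Function.invFunOn_eq hex⟩

private lemma lw_left_inv (x : ℝ) (hx : 0 ≤ x) : lambertW (x * Real.exp x) = x := by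
  have hx' : 0 ≤ x * Real.exp x := mul_nonneg hx (Real.exp_pos x).le
  obtain ⟨h1, h2⟩ := lw_spec (x * Real.exp x) hx'
  exact lw_mono.injOn h1 hx h2

/-- In a D-regular graph, the common value
`y = (α/(τ(1+D))) W((τ^((α+1)/α)/α)(1+D))` is a symmetric Nash equilibrium:
it satisfies `y = φ(D·y)` where `φ` is the best-response function. -/
theorem symmetric_nash_equilibrium (τ α : ℝ) (hτ : 0 < τ) (hα : 0 < α) (D : ℕ) :
    let y : ℝ := (α / (τ * (1 + (D : ℝ)))) * lambertW ((τ ^ ((α + 1) / α) / α) * (1 + (D : ℝ)))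
    y = (α / τ) * lambertW ((τ ^ ((α + 1) / α) / α) * Real.exp (-τ * ((D : ℝ) * y) / α)) := by
  intro y
  have hD : (0:ℝ) < 1 + (D : ℝ) := by positivity
  set K : ℝ := τ ^ ((α + 1) / α) / α with hK
  have hKpos : 0 < K := by
    have := Real.rpow_pos_of_pos hτ ((α + 1) / α)
    positivity
  set c : ℝ := K * (1 + (D : ℝ)) with hc
  have hcpos : 0 ≤ c := by positivity
  obtain ⟨hw0, hw⟩ := lw_spec c hcpos
  set w : ℝ := lambertW c with hwdef
  have hy : y = (α / (τ * (1 + (D : ℝ)))) * w := rfl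
  have harg : K * Real.exp (-τ * ((D : ℝ) * y) / α)
      = (w / (1 + (D : ℝ))) * Real.exp (w / (1 + (D : ℝ))) := by
    have hexp : -τ * ((D : ℝ) * y) / α = -((D : ℝ) * w / (1 + (D : ℝ))) := by
      rw [hy]; field_simp
    have hKc : K = w * Real.exp w / (1 + (D : ℝ)) := by
      rw [hw]; field_simp [hc]; exact hc.symm
    have key : w + -((D : ℝ) * w / (1 + (D : ℝ))) = w / (1 + (D : ℝ)) := by
      field_simp; ring
    rw [hexp, hKc, div_mul_eq_mul_div, mul_assoc, ← Real.exp_add, key]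
    ring
  rw [harg, lw_left_inv _ (by positivity)]
  rw [hy]; field_simp
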